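/- Let v ∈ R^n_+ satisfy ‖v‖₁ > t, ‖v‖₁ > t‖v‖₂, and ‖(v − λ̂𝟏)⁺‖₂ > 1, where λ̂ is the unique root of ψ(λ) = Σ_i max(v_i − λ, 0) − t. Set λ̃ = (‖v‖₁ − t‖v‖₂)/n. Then λ̃ > 0, φ(λ̃) > 0, and φ(λ̂) < 0, where φ(λ) = ‖(v − λ𝟏)⁺‖₁² − t²‖(v − λ𝟏)⁺‖₂²; in particular the unique root λ* of φ on (0, v_max) lies in (λ̃, λ̂). -/

import Mathlib

open Finset

lemma pair_sum_nonneg {n : ℕ} (f : Fin n → Fin n → ℝ) (h : ∀ i j, 0 ≤ f i j + f j i) :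
    0 ≤ ∑ i, ∑ j, f i j := by
  have hc : ∑ i, ∑ j, f i j = ∑ i, ∑ j, f j i := Finset.sum_comm
  have h2 : 0 ≤ ∑ i, ∑ j, (f i j + f j i) :=
    Finset.sum_nonneg fun i _ => Finset.sum_nonneg fun j _ => h i j
  have h3 : ∑ i, ∑ j, (f i j + f j i) = (∑ i, ∑ j, f i j) + (∑ i, ∑ j, f j i) := by
    rw [← Finset.sum_add_distrib]
    exact Finset.sum_congr rfl fun i _ => Finset.sum_add_distrib
  linarith [hc ▸ h3 ▸ h2, h2, h3, hc]

lemma pw1 (x y δ : ℝ) (hx : 0 ≤ x) (hy : 0 ≤ y) (hδ : 0 ≤ δ) :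
    0 ≤ (x * (y * max (y - δ) 0) - x ^ 2 * max (y - δ) 0)
      + (y * (x * max (x - δ) 0) - y ^ 2 * max (x - δ) 0) := by
  rcases le_total (x - δ) 0 with h1 | h1 <;> rcases le_total (y - δ) 0 with h2 | h2
  · rw [max_eq_right h1, max_eq_right h2]; nlinarith
  · rw [max_eq_right h1, max_eq_left h2]
    nlinarith [mul_nonneg (mul_nonneg hx h2) (show (0:ℝ) ≤ y - x by linarith)]
  · rw [max_eq_left h1, max_eq_right h2]
    nlinarith [mul_nonneg (mul_nonneg hy h1) (show (0:ℝ) ≤ x - y by linarith)]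
  · rw [max_eq_left h1, max_eq_left h2]
    nlinarith [mul_nonneg hδ (sq_nonneg (x - y))]

lemma pw2 (x y δ : ℝ) (hx : 0 ≤ x) (hy : 0 ≤ y) (hδ : 0 ≤ δ) :
    0 ≤ (x * (max (y - δ) 0) ^ 2 - (x * max (x - δ) 0) * max (y - δ) 0)
      + (y * (max (x - δ) 0) ^ 2 - (y * max (y - δ) 0) * max (x - δ) 0) := by
  rcases le_total (x - δ) 0 with h1 | h1 <;> rcases le_total (y - δ) 0 with h2 | h2
  · rw [max_eq_right h1, max_eq_right h2]; nlinarith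
  · rw [max_eq_right h1, max_eq_left h2]; nlinarith
  · rw [max_eq_left h1, max_eq_right h2]; nlinarith
  · rw [max_eq_left h1, max_eq_left h2]
    nlinarith [mul_nonneg hδ (sq_nonneg (x - y))]

lemma key_ineq {n : ℕ} (a : Fin n → ℝ) (δ : ℝ) (ha : ∀ i, 0 ≤ a i) (hδ : 0 ≤ δ) :
    (∑ i, (a i) ^ 2) * (∑ i, max (a i - δ) 0) ^ 2
      ≤ (∑ i, a i) ^ 2 * (∑ i, (max (a i - δ) 0) ^ 2) := by
  set b : Fin n → ℝ := fun i => max (a i - δ) 0 with hb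
  have hb0 : ∀ i, 0 ≤ b i := fun i => le_max_right _ _
  have hsa : 0 ≤ ∑ i, a i := Finset.sum_nonneg fun i _ => ha i
  have hsb : 0 ≤ ∑ i, b i := Finset.sum_nonneg fun i _ => hb0 i
  have lem1 : (∑ i, (a i) ^ 2) * (∑ i, b i) ≤ (∑ i, a i) * (∑ i, a i * b i) := by
    have h0 : 0 ≤ ∑ i, ∑ j, (a i * (a j * b j) - (a i) ^ 2 * b j) :=
      pair_sum_nonneg _ fun i j => by
        have := pw1 (a i) (a j) δ (ha i) (ha j) hδ
        simp only [hb]; nlinarith [this]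
    have e1 : (∑ i, a i) * (∑ i, a i * b i) = ∑ i, ∑ j, a i * (a j * b j) :=
      Finset.sum_mul_sum _ _ _ _
    have e2 : (∑ i, (a i) ^ 2) * (∑ i, b i) = ∑ i, ∑ j, (a i) ^ 2 * b j :=
      Finset.sum_mul_sum _ _ _ _
    have e3 : ∑ i, ∑ j, (a i * (a j * b j) - (a i) ^ 2 * b j)
        = (∑ i, ∑ j, a i * (a j * b j)) - ∑ i, ∑ j, (a i) ^ 2 * b j := by
      rw [← Finset.sum_sub_distrib]
      exact Finset.sum_congr rfl fun i _ => Finset.sum_sub_distrib _ _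
    linarith [e3 ▸ h0]
  have lem2 : (∑ i, a i * b i) * (∑ i, b i) ≤ (∑ i, a i) * (∑ i, (b i) ^ 2) := by
    have h0 : 0 ≤ ∑ i, ∑ j, (a i * (b j) ^ 2 - (a i * b i) * b j) :=
      pair_sum_nonneg _ fun i j => by
        have := pw2 (a i) (a j) δ (ha i) (ha j) hδ
        simp only [hb]; nlinarith [this]
    have e1 : (∑ i, a i) * (∑ i, (b i) ^ 2) = ∑ i, ∑ j, a i * (b j) ^ 2 :=
      Finset.sum_mul_sum _ _ _ _
    have e2 : (∑ i, a i * b i) * (∑ i, b i) = ∑ i, ∑ j, (a i * b i) * b j :=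
      Finset.sum_mul_sum _ _ _ _
    have e3 : ∑ i, ∑ j, (a i * (b j) ^ 2 - (a i * b i) * b j)
        = (∑ i, ∑ j, a i * (b j) ^ 2) - ∑ i, ∑ j, (a i * b i) * b j := by
      rw [← Finset.sum_sub_distrib]
      exact Finset.sum_congr rfl fun i _ => Finset.sum_sub_distrib _ _
    linarith [e3 ▸ h0]
  nlinarith [mul_le_mul_of_nonneg_right lem1 hsb, mul_le_mul_of_nonneg_left lem2 hsa]

theorem bounding_the_root (n : ℕ) (t : ℝ) (ht1 : 1 < t) (ht2 : t < Real.sqrt n)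
    (v : Fin n → ℝ) (hv : ∀ i, 0 ≤ v i) (vmax : ℝ)
    (hvmax_le : ∀ i, v i ≤ vmax) (hvmax_mem : ∃ i, v i = vmax)
    (h1 : ∑ i, v i > t)
    (h2 : ∑ i, v i > t * Real.sqrt (∑ i, (v i) ^ 2))
    (lamhat : ℝ) (hlamhat : (∑ i, max (v i - lamhat) 0) - t = 0)
    (h3 : Real.sqrt (∑ i, (max (v i - lamhat) 0) ^ 2) > 1)
    (lamtilde : ℝ)
    (hlamtilde : lamtilde = ((∑ i, v i) - t * Real.sqrt (∑ i, (v i) ^ 2)) / n) :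
    0 < lamtilde ∧
    (∑ i, max (v i - lamtilde) 0) ^ 2 - t ^ 2 * ∑ i, (max (v i - lamtilde) 0) ^ 2 > 0 ∧
    (∑ i, max (v i - lamhat) 0) ^ 2 - t ^ 2 * ∑ i, (max (v i - lamhat) 0) ^ 2 < 0 ∧
    ∀ lam : ℝ, 0 < lam → lam < vmax →
      (∑ i, max (v i - lam) 0) ^ 2 - t ^ 2 * ∑ i, (max (v i - lam) 0) ^ 2 = 0 →
      lamtilde < lam ∧ lam < lamhat := by
  have ht0 : (0:ℝ) < t := by linarith
  have hsv2 : (0:ℝ) ≤ ∑ i, (v i) ^ 2 := Finset.sum_nonneg fun i _ => sq_nonneg _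
  have hsqv2 : (Real.sqrt (∑ i, (v i) ^ 2)) ^ 2 = ∑ i, (v i) ^ 2 := Real.sq_sqrt hsv2
  have hn : (0:ℝ) < n := by
    have h := Real.sq_sqrt (Nat.cast_nonneg n : (0:ℝ) ≤ n)
    nlinarith [Real.sqrt_nonneg (n:ℝ)]
  -- lamtilde > 0
  have hlt0 : 0 < lamtilde := by
    rw [hlamtilde]; exact div_pos (by linarith) hn
  -- lower bound lemma: for 0 < lam ≤ lamtilde, phi(lam) > 0
  have lower : ∀ lam : ℝ, 0 < lam → lam ≤ lamtilde →
      (∑ i, max (v i - lam) 0) ^ 2 - t ^ 2 * ∑ i, (max (v i - lam) 0) ^ 2 > 0 := by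
    intro lam hl0 hlle
    have hS1 : (∑ i, v i) - n * lam ≤ ∑ i, max (v i - lam) 0 := by
      have : ∑ i, (v i - lam) ≤ ∑ i, max (v i - lam) 0 :=
        Finset.sum_le_sum fun i _ => le_max_left _ _
      have e : ∑ i : Fin n, (v i - lam) = (∑ i, v i) - n * lam := by
        rw [Finset.sum_sub_distrib, Finset.sum_const, Finset.card_univ, Fintype.card_fin,
          nsmul_eq_mul]
      linarith [e ▸ this]
    have hnl : n * lam ≤ n * lamtilde := by
      exact mul_le_mul_of_nonneg_left hlle (le_of_lt hn)
    have hnt : (n:ℝ) * lamtilde = (∑ i, v i) - t * Real.sqrt (∑ i, (v i) ^ 2) := by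
      rw [hlamtilde]; field_simp
    have hT : t * Real.sqrt (∑ i, (v i) ^ 2) ≤ ∑ i, max (v i - lam) 0 := by
      linarith [hS1, hnl, hnt]
    have hT0 : 0 ≤ t * Real.sqrt (∑ i, (v i) ^ 2) :=
      mul_nonneg (le_of_lt ht0) (Real.sqrt_nonneg _)
    have hsq : (t * Real.sqrt (∑ i, (v i) ^ 2)) ^ 2 ≤ (∑ i, max (v i - lam) 0) ^ 2 :=
      pow_le_pow_left₀ hT0 hT 2
    have hsq' : (t * Real.sqrt (∑ i, (v i) ^ 2)) ^ 2 = t ^ 2 * ∑ i, (v i) ^ 2 := by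
      rw [mul_pow, hsqv2]
    have hb2 : ∑ i, (max (v i - lam) 0) ^ 2 < ∑ i, (v i) ^ 2 := by
      obtain ⟨i0, _, hi0⟩ := Finset.exists_lt_of_sum_lt
        (show ∑ i : Fin n, (0:ℝ) < ∑ i, v i by simpa using lt_trans (by linarith) h1)
      refine Finset.sum_lt_sum (fun i _ => ?_) ⟨i0, Finset.mem_univ i0, ?_⟩
      · exact pow_le_pow_left₀ (le_max_right _ _) (max_le (by linarith [hv i]) (hv i)) 2
      · exact pow_lt_pow_left₀ (max_lt (by linarith) hi0) (le_max_right _ _) (by norm_num)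
    nlinarith [hsq, hsq', mul_lt_mul_of_pos_left hb2 (show (0:ℝ) < t ^ 2 by positivity)]
  -- upper bound lemma: for lamhat ≤ lam < vmax, phi(lam) < 0
  have upper : ∀ lam : ℝ, lamhat ≤ lam → lam < vmax →
      (∑ i, max (v i - lam) 0) ^ 2 - t ^ 2 * ∑ i, (max (v i - lam) 0) ^ 2 < 0 := by
    intro lam hge hlt
    set a : Fin n → ℝ := fun i => max (v i - lamhat) 0 with ha
    have ha0 : ∀ i, 0 ≤ a i := fun i => le_max_right _ _
    have hδ : 0 ≤ lam - lamhat := by linarith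
    have hab : ∀ i, max (v i - lam) 0 = max (a i - (lam - lamhat)) 0 := by
      intro i
      rcases le_total (v i) lamhat with h | h
      · rw [show a i = 0 from max_eq_right (by linarith), max_eq_right (by linarith),
          max_eq_right (by linarith)]
      · rw [show a i = v i - lamhat from max_eq_left (by linarith)]; ring_nf
    have hkey := key_ineq a (lam - lamhat) ha0 hδ
    have hsa : ∑ i, a i = t := by linarith [hlamhat]
    have ha2 : 1 < ∑ i, (a i) ^ 2 := by
      have hs : (0:ℝ) ≤ ∑ i, (a i) ^ 2 := Finset.sum_nonneg fun i _ => sq_nonneg _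
      nlinarith [Real.sq_sqrt hs, h3]
    have hsb : 0 < ∑ i, max (v i - lam) 0 := by
      obtain ⟨i0, hi0⟩ := hvmax_mem
      refine Finset.sum_pos' (fun i _ => le_max_right _ _) ⟨i0, Finset.mem_univ i0, ?_⟩
      exact lt_max_of_lt_left (by linarith)
    have e1 : ∑ i, max (v i - lam) 0 = ∑ i, max (a i - (lam - lamhat)) 0 :=
      Finset.sum_congr rfl fun i _ => hab i
    have e2 : ∑ i, (max (v i - lam) 0) ^ 2 = ∑ i, (max (a i - (lam - lamhat)) 0) ^ 2 :=
      Finset.sum_congr rfl fun i _ => by rw [hab i]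
    have hsb' : 0 < ∑ i, max (a i - (lam - lamhat)) 0 := e1 ▸ hsb
    rw [hsa] at hkey
    rw [e1, e2]
    nlinarith [hkey, mul_lt_mul_of_pos_right ha2 (pow_pos hsb' 2)]
  -- lamhat < vmax
  have hhatlt : lamhat < vmax := by
    obtain ⟨i0, _, hi0⟩ := Finset.exists_lt_of_sum_lt
      (show ∑ i : Fin n, (0:ℝ) < ∑ i, max (v i - lamhat) 0 by
        simp only [Finset.sum_const_zero]; linarith [hlamhat])
    have : 0 < v i0 - lamhat := by
      rcases le_total (v i0 - lamhat) 0 with h | h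
      · rw [max_eq_right h] at hi0; exact absurd hi0 (lt_irrefl _)
      · rw [max_eq_left h] at hi0; exact hi0
    linarith [hvmax_le i0]
  refine ⟨hlt0, lower lamtilde hlt0 le_rfl, upper lamhat le_rfl hhatlt, ?_⟩
  intro lam hl0 hlv hroot
  constructor
  · by_contra h
    push_neg at h
    exact absurd hroot (ne_of_gt (lower lam hl0 h))
  · by_contra h
    push_neg at h
    exact absurd hroot (ne_of_lt (upper lam h hlv))
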